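/- There exists a function f : ℚ → ℚ with f ∘ f = id whose set of discontinuity points is exactly the set of rationals in the closed interval [0,1]. -/

import Mathlib

open Filter Topology Set

def myf (x : ℚ) : ℚ :=
  if x < 0 ∨ 1 < x then x
  else if x = 0 then 1/2
  else if x = 1/2 then 0
  else if Even x.den then 1 - x
  else x

lemma myf_out {x : ℚ} (h : x < 0 ∨ 1 < x) : myf x = x := if_pos h

lemma half_den : (1/2 : ℚ).den = 2 := by norm_num

lemma myf_zero : myf 0 = 1/2 := by simp [myf]

lemma myf_half : myf (1/2) = 0 := by norm_num [myf]

lemma myf_odd {x : ℚ} (h0 : 0 < x) (h1 : x ≤ 1) (hd : Odd x.den) : myf x = x := by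
  have hx0 : x ≠ 0 := ne_of_gt h0
  have hxh : x ≠ 1/2 := by
    intro h; rw [h, half_den] at hd; exact absurd hd (by decide)
  have hne : ¬ Even x.den := Nat.not_even_iff_odd.mpr hd
  rw [myf, if_neg (not_or.mpr ⟨not_lt.mpr h0.le, not_lt.mpr h1⟩), if_neg hx0, if_neg hxh,
    if_neg hne]

lemma myf_even {x : ℚ} (h0 : 0 < x) (h1 : x < 1) (hh : x ≠ 1/2) (hd : Even x.den) :
    myf x = 1 - x := by
  rw [myf, if_neg (not_or.mpr ⟨not_lt.mpr h0.le, not_lt.mpr h1.le⟩), if_neg (ne_of_gt h0),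
    if_neg hh, if_pos hd]

lemma num_eq_self_mul_den (y : ℚ) : (y.num : ℚ) = y * (y.den : ℚ) := by
  have hden : ((y.den : ℚ)) ≠ 0 := Nat.cast_ne_zero.mpr y.den_ne_zero
  calc (y.num : ℚ) = (y.num : ℚ) / y.den * y.den := by rw [div_mul_cancel₀ _ hden]
  _ = y * y.den := by rw [Rat.num_div_den y]

lemma even_den_of_mul {y : ℚ} {c b : ℤ} (hc : Even c) (hb : Odd b)
    (h : y * (c : ℚ) = (b : ℚ)) : Even y.den := by
  have h2 : (y.num : ℚ) * (c : ℚ) = (b : ℚ) * (y.den : ℚ) := by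
    calc (y.num : ℚ) * c = (y * c) * y.den := by rw [num_eq_self_mul_den]; ring
    _ = b * y.den := by rw [h]
  have h3 : y.num * c = b * (y.den : ℤ) := by exact_mod_cast h2
  have he : Even (b * (y.den : ℤ)) := by rw [← h3]; exact hc.mul_left _
  rcases Int.even_mul.mp he with h4 | h4
  · exact absurd h4 (Int.not_even_iff_odd.mpr hb)
  · exact Int.even_coe_nat _ |>.mp h4

lemma odd_num_of_even_den {x : ℚ} (hd : Even x.den) : Odd x.num := by
  rcases Int.even_or_odd x.num with he | ho
  · exfalso
    have h2 : (2 : ℕ) ∣ x.num.natAbs := by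
      rcases he with ⟨k, hk⟩
      exact ⟨k.natAbs, by rw [hk]; simp [← two_mul, Int.natAbs_mul]⟩
    have h2' : (2 : ℕ) ∣ x.den := hd.two_dvd
    have := Nat.Coprime.eq_one_of_dvd (x.reduced.coprime_dvd_left h2) h2'
    norm_num at this
  · exact ho

lemma even_den_one_sub {x : ℚ} (hd : Even x.den) : Even (1 - x).den := by
  have h : (1 - x) * ((x.den : ℤ) : ℚ) = (((x.den : ℤ) - x.num : ℤ) : ℚ) := by
    push_cast
    rw [sub_mul, one_mul, ← num_eq_self_mul_den]
  refine even_den_of_mul (by exact_mod_cast hd) ?_ h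
  obtain ⟨a, ha⟩ : Even ((x.den : ℤ)) := by exact_mod_cast hd
  obtain ⟨b, hb⟩ := odd_num_of_even_den hd
  exact ⟨a - b - 1, by omega⟩

lemma one_den : (1 : ℚ).den = 1 := rfl

lemma myf_invol (x : ℚ) : myf (myf x) = x := by
  by_cases hout : x < 0 ∨ 1 < x
  · rw [myf_out hout, myf_out hout]
  push_neg at hout
  obtain ⟨hx0, hx1⟩ := hout
  by_cases h0 : x = 0
  · rw [h0, myf_zero, myf_half]
  by_cases hh : x = 1/2
  · rw [hh, myf_half, myf_zero]
  have h0' : 0 < x := lt_of_le_of_ne hx0 (Ne.symm h0)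
  rcases Nat.even_or_odd x.den with hd | hd
  · have hx1' : x < 1 := lt_of_le_of_ne hx1 (fun h => by
      rw [h, one_den] at hd; exact absurd hd (by decide))
    rw [myf_even h0' hx1' hh hd]
    have h12 : (1 - x) ≠ 1/2 := fun h => hh (by linarith [h])
    rw [myf_even (by linarith) (by linarith) h12 (even_den_one_sub hd)]
    ring
  · rw [myf_odd h0' hx1 hd, myf_odd h0' hx1 hd]

lemma rat_dist_lt {x y δ : ℚ} (h : |x - y| < δ) {ε : ℝ} (hδε : (δ : ℝ) < ε) :
    dist x y < ε := by
  rw [Rat.dist_eq]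
  have h1 : |(x : ℝ) - y| = ((|x - y| : ℚ) : ℝ) := by
    rw [Rat.cast_abs]; push_cast; ring_nf
  rw [h1]
  exact lt_trans (by exact_mod_cast h) hδε

lemma den_dvd_of_div (a : ℤ) (b : ℤ) : ((((a : ℚ)/(b : ℚ)).den : ℤ)) ∣ b := by
  rw [← Rat.divInt_eq_div]; exact Rat.den_dvd a b

lemma odd_den_div {a : ℤ} {m : ℕ} (hm : Odd m) : Odd ((a : ℚ)/(m : ℚ)).den := by
  have h : (((a : ℚ)/((m : ℤ) : ℚ)).den) ∣ m := by
    have := den_dvd_of_div a (m : ℤ)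
    exact_mod_cast this
  rcases Nat.even_or_odd ((a : ℚ)/(m : ℚ)).den with he | ho
  · exfalso
    obtain ⟨k, hk⟩ := (he.two_dvd.trans (by exact_mod_cast h) : 2 ∣ m)
    exact absurd (⟨k, by omega⟩ : Even m) (Nat.not_even_iff_odd.mpr hm)
  · exact ho

def Oset : Set ℚ := {y | 0 < y ∧ y ≤ 1 ∧ Odd y.den}
def Eset : Set ℚ := {y | 0 < y ∧ y < 1 ∧ y ≠ 1/2 ∧ Even y.den}

lemma denseO : ∀ x ∈ Set.Icc (0:ℚ) 1, x ∈ closure Oset := by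
  intro x hx
  rw [Metric.mem_closure_iff]
  intro ε hε
  obtain ⟨δ, hδ0, hδε⟩ := exists_rat_btwn hε
  have hδ0' : (0:ℚ) < δ := by exact_mod_cast hδ0
  obtain ⟨n, hn⟩ := exists_nat_gt (1/δ : ℚ)
  set m : ℕ := 2*n+1 with hm
  have hmodd : Odd m := ⟨n, by omega⟩
  have hm0 : (0:ℚ) < m := by positivity
  have hnm : (1/δ : ℚ) < m := by
    have : (n:ℚ) ≤ m := by exact_mod_cast (by omega : n ≤ m)
    linarith
  have hmδ : (1:ℚ)/m < δ := by
    rw [div_lt_iff₀ hm0]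
    have := (div_lt_iff₀ hδ0').mp hnm
    linarith
  by_cases hx0 : x = 0
  · refine ⟨((1:ℤ):ℚ)/(m:ℚ), ⟨by positivity, ?_, odd_den_div hmodd⟩, ?_⟩
    · rw [div_le_one hm0]
      exact_mod_cast (by omega : 1 ≤ m)
    · refine rat_dist_lt ?_ hδε
      rw [hx0, zero_sub, abs_neg, abs_of_nonneg (by positivity)]
      simpa using hmδ
  · have hx0' : 0 < x := lt_of_le_of_ne hx.1 (Ne.symm hx0)
    set c : ℤ := ⌈x * m⌉ with hc
    have hc1 : 1 ≤ c := Int.ceil_pos.mpr (mul_pos hx0' hm0)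
    have hcm : c ≤ (m:ℤ) := Int.ceil_le.mpr (by push_cast; nlinarith [hx.2])
    have hxc : x * m ≤ (c:ℚ) := Int.le_ceil _
    have hcx : (c:ℚ) < x * m + 1 := Int.ceil_lt_add_one _
    refine ⟨(c:ℚ)/m, ⟨?_, ?_, odd_den_div hmodd⟩, ?_⟩
    · exact div_pos (by exact_mod_cast hc1) hm0
    · rw [div_le_one hm0]; exact_mod_cast hcm
    · refine rat_dist_lt ?_ hδε
      rw [abs_sub_lt_iff]
      have hle : x ≤ (c:ℚ)/m := (le_div_iff₀ hm0).mpr hxc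
      have hlt : (c:ℚ)/m < x + 1/m := by
        rw [div_lt_iff₀ hm0, add_mul, one_div, inv_mul_cancel₀ (ne_of_gt hm0)]
        linarith
      constructor
      · linarith
      · linarith

lemma denseE : ∀ x ∈ Set.Icc (0:ℚ) 1, x ∈ closure Eset := by
  intro x hx
  rw [Metric.mem_closure_iff]
  intro ε hε
  obtain ⟨δ, hδ0, hδε⟩ := exists_rat_btwn hε
  have hδ0' : (0:ℚ) < δ := by exact_mod_cast hδ0
  obtain ⟨n, hn⟩ := exists_nat_gt (1/δ : ℚ)
  set M : ℕ := 2*n+2 with hM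
  have hM0 : (0:ℚ) < M := by positivity
  have hnM : (1/δ : ℚ) < M := by
    have : (n:ℚ) ≤ M := by exact_mod_cast (by omega : n ≤ M)
    linarith
  have hMδ : (1:ℚ)/M < δ := by
    rw [div_lt_iff₀ hM0]
    have := (div_lt_iff₀ hδ0').mp hnM
    linarith
  have hδM : 1 < δ * M := by
    rw [div_lt_iff₀ hM0] at hMδ; linarith
  have hK0 : ((2*M : ℕ):ℚ) ≠ 0 := by positivity
  have hKM : ((2*M : ℕ):ℚ) = 2*(M:ℚ) := by push_cast; ring
  by_cases hx0 : x = 0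
  · refine ⟨1/((2*M:ℕ):ℚ), ⟨by positivity, ?_, ?_, ?_⟩, ?_⟩
    · rw [div_lt_one (by positivity)]
      exact_mod_cast (by omega : 1 < 2*M)
    · intro h
      have h1 : (1:ℚ) = 1/2 * ((2*M:ℕ):ℚ) := by
        rw [← h, div_mul_cancel₀ _ hK0]
      rw [hKM] at h1
      have h2 : (M:ℚ) = 1 := by linarith
      have : M = 1 := by exact_mod_cast h2
      omega
    · refine even_den_of_mul (c := (2*M:ℕ)) (b := 1) ⟨(M:ℤ), by push_cast; ring⟩ ⟨0, by ring⟩ ?_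
      push_cast
      field_simp
    · refine rat_dist_lt ?_ hδε
      rw [hx0, zero_sub, abs_neg, abs_of_nonneg (by positivity)]
      calc (1:ℚ)/((2*M:ℕ):ℚ) ≤ 1/M := by
            apply div_le_div_of_nonneg_left (by norm_num) hM0
            rw [hKM]; linarith
        _ < δ := hMδ
  · have hx0' : 0 < x := lt_of_le_of_ne hx.1 (Ne.symm hx0)
    set c : ℤ := ⌈x * M⌉ with hc
    have hc1 : 1 ≤ c := Int.ceil_pos.mpr (mul_pos hx0' hM0)
    have hcM : c ≤ (M:ℤ) := Int.ceil_le.mpr (by push_cast; nlinarith [hx.2])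
    have hxc : x * M ≤ (c:ℚ) := Int.le_ceil _
    have hcx : (c:ℚ) < x * M + 1 := Int.ceil_lt_add_one _
    set y : ℚ := ((2*c-1 : ℤ):ℚ)/((2*M:ℕ):ℚ) with hy
    have hyK : y * (2*(M:ℚ)) = 2*(c:ℚ) - 1 := by
      rw [← hKM, hy, div_mul_cancel₀ _ hK0]
      push_cast; ring
    have hcM' : (c:ℚ) ≤ (M:ℚ) := by exact_mod_cast hcM
    refine ⟨y, ⟨?_, ?_, ?_, even_den_of_mul (c := (2*M:ℕ)) (b := 2*c-1)
        ⟨(M:ℤ), by push_cast; ring⟩ ⟨c-1, by ring⟩ (by push_cast; push_cast at hyK; linarith)⟩, ?_⟩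
    · rw [hy]
      apply div_pos _ (by positivity)
      exact_mod_cast (by omega : (0:ℤ) < 2*c-1)
    · rw [hy, div_lt_one (by positivity), hKM]
      exact_mod_cast (by omega : (2*c-1 : ℤ) < 2*(M:ℤ))
    · intro hhalf
      have hv : (1/2 : ℚ) * (2*(M:ℚ)) = 2*(c:ℚ)-1 := by rw [← hhalf]; exact hyK
      have h2 : (M:ℚ) = 2*(c:ℚ)-1 := by linarith
      have h3 : (M:ℤ) = 2*c-1 := by exact_mod_cast h2
      omega
    · refine rat_dist_lt ?_ hδε
      rw [abs_sub_lt_iff]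
      constructor
      · nlinarith
      · nlinarith

theorem stmt_12 : ∃ f : ℚ → ℚ, (∀ x, f (f x) = x) ∧
    {x : ℚ | ¬ ContinuousAt f x} = Set.Icc (0 : ℚ) 1 := by
  refine ⟨myf, myf_invol, ?_⟩
  ext x
  simp only [Set.mem_setOf_eq]
  constructor
  · intro hdis
    by_contra hx
    apply hdis
    have hx' : x < 0 ∨ 1 < x := by
      rcases lt_or_ge x 0 with h | h
      · exact Or.inl h
      rcases le_or_gt x 1 with h2 | h2
      · exact absurd ⟨h, h2⟩ hx
      · exact Or.inr h2
    have hev : myf =ᶠ[𝓝 x] id := by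
      have hop : IsOpen {y : ℚ | y < 0 ∨ 1 < y} := (isOpen_gt' 0).union (isOpen_lt' 1)
      filter_upwards [hop.mem_nhds hx'] with y hy
      exact myf_out hy
    exact continuousAt_id.congr hev.symm
  · intro hx hcont
    have hO' : (𝓝[Oset] x).NeBot := mem_closure_iff_nhdsWithin_neBot.mp (denseO x hx)
    have hE' : (𝓝[Eset] x).NeBot := mem_closure_iff_nhdsWithin_neBot.mp (denseE x hx)
    have t1 : Tendsto myf (𝓝[Oset] x) (𝓝 x) := by
      refine (tendsto_id.mono_left nhdsWithin_le_nhds).congr' ?_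
      filter_upwards [self_mem_nhdsWithin] with y hy
      exact (myf_odd hy.1 hy.2.1 hy.2.2).symm
    have t1' : Tendsto myf (𝓝[Oset] x) (𝓝 (myf x)) :=
      hcont.tendsto.mono_left nhdsWithin_le_nhds
    have e1 : myf x = x := tendsto_nhds_unique t1' t1
    have t2 : Tendsto myf (𝓝[Eset] x) (𝓝 (1 - x)) := by
      refine (((continuous_const.sub continuous_id).tendsto x).mono_left
        nhdsWithin_le_nhds).congr' ?_
      filter_upwards [self_mem_nhdsWithin] with y hy
      exact (myf_even hy.1 hy.2.1 hy.2.2.1 hy.2.2.2).symm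
    have t2' : Tendsto myf (𝓝[Eset] x) (𝓝 (myf x)) :=
      hcont.tendsto.mono_left nhdsWithin_le_nhds
    have e2 : myf x = 1 - x := tendsto_nhds_unique t2' t2
    have hxh : x = 1/2 := by rw [e1] at e2; linarith
    rw [hxh, myf_half] at e1
    norm_num at e1
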